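/- For an NMVM random variable S, the tail variance TV_α(S) = E[(S − CTE_α(S))² | S > s_α] equals c*(1−α*)/(1−α) · σ² (1 + (s_α − μ) h_{S*}(s_α)) + c**(1−α**)/(1−α) · γ (γ + σ² h_{S**}(s_α)) − [c*(1−α*)/(1−α) · (γ + σ² h_{S*}(s_α))]², where c* = E[Θ], c** = E[Θ²], S* and S** are the NMVM variables with mixing densities θπ(θ)/c* and θ²π(θ)/c** respectively, α^{*(l)} = 1 − F̄_{S^{*(l)}}(s_α), and h denotes the hazard function. -/

import Mathlib

open MeasureTheory Set

/-- Density of the normal distribution with mean `m` and variance `v`. -/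
noncomputable def ndens (m v x : ℝ) : ℝ :=
  (Real.sqrt (2 * Real.pi * v))⁻¹ * Real.exp (-(x - m) ^ 2 / (2 * v))

/-- Density of the univariate NMVM distribution with parameters `μ, γ, σ` and
mixing density `q` on `(0, ∞)`. -/
noncomputable def mixdens (μ γ σ : ℝ) (q : ℝ → ℝ) (s : ℝ) : ℝ :=
  ∫ θ in Set.Ioi (0:ℝ), ndens (μ + θ * γ) (θ * σ ^ 2) s * q θ

/-- Survival function of the univariate NMVM distribution. -/
noncomputable def surv (μ γ σ : ℝ) (q : ℝ → ℝ) (c : ℝ) : ℝ :=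
  ∫ s in Set.Ioi c, mixdens μ γ σ q s

/-- `k`-th tail moment `E[S^k | S > c]` of the univariate NMVM distribution. -/
noncomputable def tailmom (μ γ σ : ℝ) (q : ℝ → ℝ) (k : ℕ) (c : ℝ) : ℝ :=
  (surv μ γ σ q c)⁻¹ * ∫ s in Set.Ioi c, s ^ k * mixdens μ γ σ q s

section NMVMAux

open Filter

lemma ndens_nonneg (m v x : ℝ) : 0 ≤ ndens m v x :=
  mul_nonneg (inv_nonneg.2 (Real.sqrt_nonneg _)) (Real.exp_pos _).le

lemma ndens_eq (m v x : ℝ) :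
    ndens m v x = (Real.sqrt (2 * Real.pi * v))⁻¹ * Real.exp (-(2*v)⁻¹ * (x - m)^2) := by
  unfold ndens
  congr 1
  congr 1
  ring

lemma aux_pow_mul_exp_integrable (n : ℕ) {b : ℝ} (hb : 0 < b) :
    Integrable (fun x : ℝ => x ^ n * Real.exp (-b * x ^ 2)) := by
  have hmeas : AEStronglyMeasurable (fun x : ℝ => x ^ n * Real.exp (-b * x ^ 2)) volume :=
    ((measurable_id.pow_const n).mul
      (((measurable_id.pow_const 2).const_mul (-b)).exp)).aestronglyMeasurable
  refine Integrable.mono' ((integrable_exp_neg_mul_sq (half_pos hb)).const_mul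
    ((n.factorial : ℝ) * Real.exp ((2*b)⁻¹))) hmeas ?_
  filter_upwards with x
  have h1 : |x| ^ n ≤ (n.factorial : ℝ) * Real.exp |x| := by
    have h := Real.pow_div_factorial_le_exp |x| (abs_nonneg x) n
    rw [div_le_iff₀ (by positivity)] at h
    linarith [h]
  have h2 : Real.exp |x| * Real.exp (-b * x^2) ≤ Real.exp ((2*b)⁻¹) * Real.exp (-(b/2) * x^2) := by
    rw [← Real.exp_add, ← Real.exp_add]
    apply Real.exp_le_exp.2
    have hb0 : b ≠ 0 := ne_of_gt hb
    have expand : ∀ u : ℝ, (2*b)⁻¹ + -(b/2)*u^2 - (u + -b*u^2) = (b/2)*(u - b⁻¹)^2 := by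
      intro u
      field_simp
      ring
    have h8 := mul_nonneg (le_of_lt (half_pos hb)) (sq_nonneg (|x| - b⁻¹))
    rw [← sq_abs x]
    linarith [expand |x|]
  have hnorm : ‖x ^ n * Real.exp (-b * x ^ 2)‖ = |x| ^ n * Real.exp (-b * x ^ 2) := by
    rw [Real.norm_eq_abs, abs_mul, abs_pow, abs_of_pos (Real.exp_pos _)]
  rw [hnorm]
  calc |x| ^ n * Real.exp (-b * x ^ 2)
      ≤ ((n.factorial : ℝ) * Real.exp |x|) * Real.exp (-b * x ^ 2) :=
        mul_le_mul_of_nonneg_right h1 (Real.exp_pos _).le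
    _ = (n.factorial : ℝ) * (Real.exp |x| * Real.exp (-b * x ^ 2)) := by ring
    _ ≤ (n.factorial : ℝ) * (Real.exp ((2*b)⁻¹) * Real.exp (-(b/2) * x^2)) :=
        mul_le_mul_of_nonneg_left h2 (by positivity)
    _ = (n.factorial : ℝ) * Real.exp ((2*b)⁻¹) * Real.exp (-(b/2) * x^2) := by ring

lemma aux_gauss_integrable (n : ℕ) {b : ℝ} (hb : 0 < b) (m : ℝ) :
    Integrable (fun x : ℝ => x ^ n * Real.exp (-b * (x - m) ^ 2)) := by
  have h : Integrable (fun t : ℝ => (t + m) ^ n * Real.exp (-b * t ^ 2)) := by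
    have he : (fun t : ℝ => (t + m) ^ n * Real.exp (-b * t ^ 2))
        = fun t => ∑ j ∈ Finset.range (n+1),
            (t ^ j * Real.exp (-b * t^2)) * (m ^ (n - j) * (n.choose j : ℝ)) := by
      funext t
      rw [add_pow, Finset.sum_mul]
      exact Finset.sum_congr rfl fun j _ => by ring
    rw [he]
    exact integrable_finset_sum _ fun j _ => (aux_pow_mul_exp_integrable j hb).mul_const _
  have h2 := h.comp_sub_right m
  simpa using h2

lemma aux_pow_mul_exp_tendsto (n : ℕ) {b : ℝ} (hb : 0 < b) :
    Tendsto (fun x : ℝ => x ^ n * Real.exp (-b * x ^ 2)) atTop (nhds 0) := by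
  apply squeeze_zero_norm' (a := fun x : ℝ => x ^ n * Real.exp (-x))
  · filter_upwards [eventually_ge_atTop (max b⁻¹ 1)] with x hx
    have hx1 : (1:ℝ) ≤ x := le_trans (le_max_right _ _) hx
    have hxb : b⁻¹ ≤ x := le_trans (le_max_left _ _) hx
    have hxpos : 0 < x := lt_of_lt_of_le one_pos hx1
    have hxx : x ≤ b * x ^ 2 := by
      have : 1 ≤ b * x := by
        rw [← inv_mul_cancel₀ (ne_of_gt hb)] at *
        nlinarith [hb]
      nlinarith [hxpos]
    have : Real.exp (-b * x ^ 2) ≤ Real.exp (-x) := Real.exp_le_exp.2 (by linarith)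
    rw [Real.norm_eq_abs, abs_mul, abs_pow, abs_of_pos (Real.exp_pos _), abs_of_pos hxpos]
    exact mul_le_mul_of_nonneg_left this (by positivity)
  · exact Real.tendsto_pow_mul_exp_neg_atTop_nhds_zero n

lemma aux_gauss_tendsto (n : ℕ) {b : ℝ} (hb : 0 < b) (m : ℝ) :
    Tendsto (fun x : ℝ => x ^ n * Real.exp (-b * (x - m) ^ 2)) atTop (nhds 0) := by
  have h : Tendsto (fun t : ℝ => (t + m) ^ n * Real.exp (-b * t ^ 2)) atTop (nhds 0) := by
    have he : (fun t : ℝ => (t + m) ^ n * Real.exp (-b * t ^ 2))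
        = fun t => ∑ j ∈ Finset.range (n+1),
            (t ^ j * Real.exp (-b * t^2)) * (m ^ (n - j) * (n.choose j : ℝ)) := by
      funext t
      rw [add_pow, Finset.sum_mul]
      exact Finset.sum_congr rfl fun j _ => by ring
    rw [he]
    have : Tendsto (fun t : ℝ => ∑ j ∈ Finset.range (n+1),
        (t ^ j * Real.exp (-b * t^2)) * (m ^ (n - j) * (n.choose j : ℝ))) atTop
        (nhds (∑ j ∈ Finset.range (n+1), 0 * (m ^ (n - j) * (n.choose j : ℝ)))) :=
      tendsto_finset_sum _ fun j _ => (aux_pow_mul_exp_tendsto j hb).mul_const _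
    simpa using this
  have h2 : Tendsto (fun x : ℝ => x - m) atTop atTop := tendsto_atTop_add_const_right _ (-m) tendsto_id
  exact (h.comp h2).congr fun x => by simp [Function.comp]

lemma aux_ndens_b_pos {v : ℝ} (hv : 0 < v) : 0 < (2*v)⁻¹ := by positivity

lemma ndens_integrable_pow (k : ℕ) {v : ℝ} (hv : 0 < v) (m : ℝ) :
    Integrable (fun x : ℝ => x ^ k * ndens m v x) := by
  have he : (fun x : ℝ => x ^ k * ndens m v x)
      = fun x => (Real.sqrt (2 * Real.pi * v))⁻¹ * (x ^ k * Real.exp (-(2*v)⁻¹ * (x - m)^2)) := by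
    funext x; rw [ndens_eq]; ring
  rw [he]
  exact (aux_gauss_integrable k (aux_ndens_b_pos hv) m).const_mul _

lemma ndens_tendsto_pow (k : ℕ) {v : ℝ} (hv : 0 < v) (m : ℝ) :
    Tendsto (fun x : ℝ => x ^ k * ndens m v x) atTop (nhds 0) := by
  have he : (fun x : ℝ => x ^ k * ndens m v x)
      = fun x => (Real.sqrt (2 * Real.pi * v))⁻¹ * (x ^ k * Real.exp (-(2*v)⁻¹ * (x - m)^2)) := by
    funext x; rw [ndens_eq]; ring
  rw [he]
  have := (aux_gauss_tendsto k (aux_ndens_b_pos hv) m).const_mul ((Real.sqrt (2 * Real.pi * v))⁻¹)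
  simpa using this

lemma ndens_integrable {v : ℝ} (hv : 0 < v) (m : ℝ) : Integrable (ndens m v) := by
  have := ndens_integrable_pow 0 hv m
  simpa using this

lemma ndens_continuous (m v : ℝ) : Continuous (ndens m v) := by
  unfold ndens
  exact continuous_const.mul ((((continuous_id.sub continuous_const).pow 2).neg.div_const _).rexp)

lemma ndens_integral {v : ℝ} (hv : 0 < v) (m : ℝ) : ∫ x, ndens m v x = 1 := by
  have he : (fun x : ℝ => ndens m v x)
      = fun x => (Real.sqrt (2 * Real.pi * v))⁻¹ * Real.exp (-(2*v)⁻¹ * (x - m)^2) := by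
    funext x; rw [ndens_eq]
  rw [he, integral_const_mul]
  have h1 : ∫ x : ℝ, Real.exp (-(2*v)⁻¹ * (x - m)^2)
      = ∫ x : ℝ, Real.exp (-(2*v)⁻¹ * x^2) := by
    exact integral_sub_right_eq_self (fun x => Real.exp (-(2*v)⁻¹ * x^2)) m
  rw [h1, integral_gaussian]
  have h2 : Real.pi / (2*v)⁻¹ = 2 * Real.pi * v := by
    field_simp
  rw [h2]
  exact inv_mul_cancel₀ (ne_of_gt (Real.sqrt_pos.2 (by positivity)))

lemma ndens_hasDerivAt {v : ℝ} (hv : 0 < v) (m x : ℝ) :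
    HasDerivAt (ndens m v) (ndens m v x * (-(x - m) / v)) x := by
  have hfun : ndens m v = fun x => (Real.sqrt (2 * Real.pi * v))⁻¹ *
      Real.exp (-(2*v)⁻¹ * (x - m)^2) := funext fun x => ndens_eq m v x
  have h1 : HasDerivAt (fun x : ℝ => -(2*v)⁻¹ * (x - m)^2)
      (-(2*v)⁻¹ * ((2:ℕ) * (x - m)^1 * 1)) x :=
    (((hasDerivAt_id x).sub_const m).pow 2).const_mul _
  have h2 := (h1.exp).const_mul ((Real.sqrt (2 * Real.pi * v))⁻¹)
  rw [hfun]
  refine h2.congr_deriv ?_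
  beta_reduce
  push_cast
  field_simp

lemma gauss_tail_deriv_int {v : ℝ} (hv : 0 < v) (m c : ℝ) :
    ∫ x in Ioi c, ndens m v x * (-(x - m) / v) = - ndens m v c := by
  have hD : ∀ x ∈ Ioi c, HasDerivAt (ndens m v) (ndens m v x * (-(x - m)/v)) x :=
    fun x _ => ndens_hasDerivAt hv m x
  have hDint : IntegrableOn (fun x => ndens m v x * (-(x - m)/v)) (Ioi c) := by
    have he : (fun x => ndens m v x * (-(x - m)/v))
        = fun x => (m/v) * (x^0 * ndens m v x) - v⁻¹ * (x^1 * ndens m v x) := by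
      funext x
      field_simp
      ring
    rw [he]
    exact (((ndens_integrable_pow 0 hv m).const_mul _).sub
      ((ndens_integrable_pow 1 hv m).const_mul _)).integrableOn
  have hT : Tendsto (ndens m v) atTop (nhds 0) := by
    have := ndens_tendsto_pow 0 hv m
    simpa using this
  have key := integral_Ioi_of_hasDerivAt_of_tendsto
    ((ndens_continuous m v).continuousWithinAt) hD hDint hT
  rw [key]; ring

lemma gauss_tail0_le_one {v : ℝ} (hv : 0 < v) (m c : ℝ) :
    ∫ x in Ioi c, ndens m v x ≤ 1 := by
  rw [← ndens_integral hv m]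
  exact setIntegral_le_integral (ndens_integrable hv m)
    (Eventually.of_forall fun x => ndens_nonneg m v x)

lemma gauss_tail0_nonneg (m v c : ℝ) : 0 ≤ ∫ x in Ioi c, ndens m v x :=
  setIntegral_nonneg measurableSet_Ioi fun x _ => ndens_nonneg m v x

lemma gauss_tail1 {v : ℝ} (hv : 0 < v) (m c : ℝ) :
    ∫ x in Ioi c, x * ndens m v x
      = m * (∫ x in Ioi c, ndens m v x) + v * ndens m v c := by
  have hDint : IntegrableOn (fun x => ndens m v x * (-(x - m)/v)) (Ioi c) := by
    have he : (fun x => ndens m v x * (-(x - m)/v))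
        = fun x => (m/v) * (x^0 * ndens m v x) - v⁻¹ * (x^1 * ndens m v x) := by
      funext x; field_simp; ring
    rw [he]
    exact (((ndens_integrable_pow 0 hv m).const_mul _).sub
      ((ndens_integrable_pow 1 hv m).const_mul _)).integrableOn
  have expand : (fun x : ℝ => x * ndens m v x)
      = fun x => m * ndens m v x - v * (ndens m v x * (-(x - m)/v)) := by
    funext x; field_simp; ring
  rw [expand, integral_sub ((ndens_integrable hv m).integrableOn.const_mul m)
    (hDint.const_mul v), integral_const_mul, integral_const_mul, gauss_tail_deriv_int hv m c]
  ring

lemma gauss_tail2 {v : ℝ} (hv : 0 < v) (m c : ℝ) :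
    ∫ x in Ioi c, x^2 * ndens m v x
      = (m^2 + v) * (∫ x in Ioi c, ndens m v x) + (m + c) * v * ndens m v c := by
  have hDint : IntegrableOn (fun x => x * (ndens m v x * (-(x - m)/v))) (Ioi c) := by
    have he : (fun x => x * (ndens m v x * (-(x - m)/v)))
        = fun x => (m/v) * (x^1 * ndens m v x) - v⁻¹ * (x^2 * ndens m v x) := by
      funext x; field_simp; ring
    rw [he]
    exact (((ndens_integrable_pow 1 hv m).const_mul _).sub
      ((ndens_integrable_pow 2 hv m).const_mul _)).integrableOn
  have hD : ∀ x ∈ Ioi c, HasDerivAt (fun y => y * ndens m v y)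
      (ndens m v x + x * (ndens m v x * (-(x - m)/v))) x := by
    intro x _
    have := (hasDerivAt_id' (x := x)).mul (ndens_hasDerivAt hv m x)
    refine this.congr_deriv ?_
    simp only [id_eq, one_mul]
  have hsum : IntegrableOn (fun x => ndens m v x + x * (ndens m v x * (-(x - m)/v))) (Ioi c) :=
    (ndens_integrable hv m).integrableOn.add hDint
  have hT : Tendsto (fun x => x * ndens m v x) atTop (nhds 0) := by
    have := ndens_tendsto_pow 1 hv m
    simpa using this
  have key := integral_Ioi_of_hasDerivAt_of_tendsto
    ((continuous_id.mul (ndens_continuous m v)).continuousWithinAt) hD hsum hT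
  rw [integral_add (ndens_integrable hv m).integrableOn hDint] at key
  simp only [id_eq, Pi.mul_apply] at key
  have hJ : ∫ x in Ioi c, x * (ndens m v x * (-(x - m)/v))
      = - c * ndens m v c - ∫ x in Ioi c, ndens m v x := by
    linarith [key]
  have expand : (fun x : ℝ => x^2 * ndens m v x)
      = fun x => m * (x * ndens m v x) - v * (x * (ndens m v x * (-(x - m)/v))) := by
    funext x; field_simp; ring
  have hint1 : Integrable (fun x : ℝ => x * ndens m v x) := by
    simpa using ndens_integrable_pow 1 hv m
  rw [expand, integral_sub ((hint1.integrableOn).const_mul m) (hDint.const_mul v)]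
  rw [integral_const_mul, integral_const_mul, hJ]
  have h1 : ∫ x in Ioi c, x * ndens m v x
      = m * (∫ x in Ioi c, ndens m v x) + v * ndens m v c := gauss_tail1 hv m c
  rw [h1]
  ring

lemma ndens_le_inv_sqrt {v : ℝ} (hv : 0 < v) (m x : ℝ) :
    ndens m v x ≤ (Real.sqrt (2*Real.pi*v))⁻¹ := by
  unfold ndens
  have h1 : Real.exp (-(x-m)^2/(2*v)) ≤ 1 := by
    rw [Real.exp_le_one_iff]
    apply div_nonpos_of_nonpos_of_nonneg (neg_nonpos.2 (sq_nonneg _)) (by positivity)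
  exact mul_le_of_le_one_right (inv_nonneg.2 (Real.sqrt_nonneg _)) h1

lemma sqrt_decomp {σ θ : ℝ} (hσ : 0 < σ) (hθ : 0 ≤ θ) :
    Real.sqrt (2*Real.pi*(θ*σ^2)) = Real.sqrt (2*Real.pi*σ^2) * Real.sqrt θ := by
  rw [← Real.sqrt_mul (by positivity)]
  congr 1
  ring

lemma ndens_le_c0 {σ : ℝ} (hσ : 0 < σ) (μ γ x : ℝ) {θ : ℝ} (hθ : 0 < θ) :
    ndens (μ+θ*γ) (θ*σ^2) x ≤ (Real.sqrt (2*Real.pi*σ^2))⁻¹ * (Real.sqrt θ)⁻¹ := by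
  have h := ndens_le_inv_sqrt (v := θ*σ^2) (by positivity) (μ+θ*γ) x
  rwa [sqrt_decomp hσ hθ.le, mul_inv] at h

lemma ndens_theta_bound {σ : ℝ} (hσ : 0 < σ) (μ γ : ℝ) {s : ℝ} (hs : s ≠ μ) :
    ∃ C : ℝ, 0 ≤ C ∧ ∀ θ ∈ Ioi (0:ℝ), ndens (μ + θ*γ) (θ*σ^2) s ≤ C := by
  have hd : s - μ ≠ 0 := sub_ne_zero.2 hs
  refine ⟨Real.exp ((s-μ)*γ/σ^2) * ((Real.sqrt (2*Real.pi*σ^2))⁻¹ * Real.sqrt (σ^2/(s-μ)^2)),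
    by positivity, ?_⟩
  intro θ hθ
  have hθ0 : (0:ℝ) < θ := hθ
  have hv : 0 < θ*σ^2 := by positivity
  have hexp : -(s - (μ + θ*γ))^2 / (2*(θ*σ^2)) ≤ (s-μ)*γ/σ^2 + -((s-μ)^2) / (2*(θ*σ^2)) := by
    have h1 : -(s - (μ + θ*γ))^2 ≤ -((s-μ)^2) + 2*(s-μ)*γ*θ := by nlinarith [sq_nonneg (θ*γ)]
    have h2 : -(s - (μ + θ*γ))^2 / (2*(θ*σ^2)) ≤ (-((s-μ)^2) + 2*(s-μ)*γ*θ) / (2*(θ*σ^2)) := by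
      gcongr
    have h3 : (-((s-μ)^2) + 2*(s-μ)*γ*θ) / (2*(θ*σ^2))
        = (s-μ)*γ/σ^2 + -((s-μ)^2) / (2*(θ*σ^2)) := by
      field_simp
      ring
    linarith
  have hkey : (Real.sqrt θ)⁻¹ * Real.exp (-((s-μ)^2) / (2*(θ*σ^2))) ≤ Real.sqrt (σ^2/(s-μ)^2) := by
    apply Real.le_sqrt_of_sq_le
    have hsq : Real.sqrt θ * Real.sqrt θ = θ := Real.mul_self_sqrt hθ0.le
    have e1 : ((Real.sqrt θ)⁻¹ * Real.exp (-((s-μ)^2) / (2*(θ*σ^2))))^2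
        = θ⁻¹ * Real.exp (-((s-μ)^2) / (θ*σ^2)) := by
      rw [mul_pow, pow_two, pow_two, ← Real.exp_add, ← mul_inv, hsq]
      congr 1
      congr 1
      field_simp
      ring
    rw [e1]
    have hX : 0 < (s-μ)^2/(θ*σ^2) := by positivity
    have h5 : Real.exp (-((s-μ)^2)/(θ*σ^2)) ≤ θ*σ^2/(s-μ)^2 := by
      rw [neg_div, Real.exp_neg]
      have h6 : (s-μ)^2/(θ*σ^2) ≤ Real.exp ((s-μ)^2/(θ*σ^2)) := by
        linarith [Real.add_one_le_exp ((s-μ)^2/(θ*σ^2))]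
      calc (Real.exp ((s-μ)^2/(θ*σ^2)))⁻¹ ≤ ((s-μ)^2/(θ*σ^2))⁻¹ := by
            apply inv_anti₀ hX h6
        _ = θ*σ^2/(s-μ)^2 := by rw [inv_div]
    calc θ⁻¹ * Real.exp (-((s-μ)^2)/(θ*σ^2)) ≤ θ⁻¹ * (θ*σ^2/(s-μ)^2) :=
          mul_le_mul_of_nonneg_left h5 (by positivity)
      _ = σ^2/(s-μ)^2 := by field_simp
  calc ndens (μ+θ*γ) (θ*σ^2) s
      = (Real.sqrt (2*Real.pi*(θ*σ^2)))⁻¹ * Real.exp (-(s - (μ+θ*γ))^2/(2*(θ*σ^2))) := rfl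
    _ ≤ (Real.sqrt (2*Real.pi*(θ*σ^2)))⁻¹ *
        (Real.exp ((s-μ)*γ/σ^2) * Real.exp (-((s-μ)^2)/(2*(θ*σ^2)))) := by
        rw [← Real.exp_add]
        exact mul_le_mul_of_nonneg_left (Real.exp_le_exp.2 hexp)
          (inv_nonneg.2 (Real.sqrt_nonneg _))
    _ = Real.exp ((s-μ)*γ/σ^2) * ((Real.sqrt (2*Real.pi*σ^2))⁻¹ *
        ((Real.sqrt θ)⁻¹ * Real.exp (-((s-μ)^2)/(2*(θ*σ^2))))) := by
        rw [sqrt_decomp hσ hθ0.le, mul_inv]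
        ring
    _ ≤ Real.exp ((s-μ)*γ/σ^2) * ((Real.sqrt (2*Real.pi*σ^2))⁻¹ * Real.sqrt (σ^2/(s-μ)^2)) := by
        apply mul_le_mul_of_nonneg_left _ (Real.exp_pos _).le
        exact mul_le_mul_of_nonneg_left hkey (inv_nonneg.2 (Real.sqrt_nonneg _))

lemma ndens_joint_meas (μ γ σ : ℝ) :
    Measurable (fun z : ℝ × ℝ => ndens (μ + z.2*γ) (z.2*σ^2) z.1) := by
  unfold ndens
  apply Measurable.mul
  · exact ((measurable_snd.mul_const (σ^2)).const_mul (2*Real.pi)).sqrt.inv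
  · apply Measurable.exp
    exact (((measurable_fst.sub ((measurable_snd.mul_const γ).const_add μ)).pow_const 2).neg).div
      ((measurable_snd.mul_const (σ^2)).const_mul 2)

lemma mixdens_nonneg (μ γ σ : ℝ) {q : ℝ → ℝ} (hq0 : ∀ θ ∈ Ioi (0:ℝ), 0 ≤ q θ) (s : ℝ) :
    0 ≤ mixdens μ γ σ q s :=
  setIntegral_nonneg measurableSet_Ioi fun θ hθ =>
    mul_nonneg (ndens_nonneg _ _ _) (hq0 θ hθ)

lemma swap_lemma (μ γ σ sα : ℝ) (hσ : 0 < σ) (k : ℕ) (q : ℝ → ℝ) (hq : Measurable q)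
    (hq0 : ∀ θ ∈ Ioi (0:ℝ), 0 ≤ q θ) (hqi : IntegrableOn q (Ioi 0))
    (hint : IntegrableOn (fun s => |s| ^ k * mixdens μ γ σ q s) (Ioi sα)) :
    ∫ s in Ioi sα, s ^ k * mixdens μ γ σ q s
      = ∫ θ in Ioi 0, (∫ s in Ioi sα, s ^ k * ndens (μ + θ*γ) (θ*σ^2) s) * q θ := by
  set f : ℝ → ℝ → ℝ := fun s θ => s^k * (ndens (μ + θ*γ) (θ*σ^2) s * q θ) with hfdef
  have hFmeas : Measurable (Function.uncurry f) := by
    apply Measurable.mul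
    · exact measurable_fst.pow_const k
    · exact (ndens_joint_meas μ γ σ).mul (hq.comp measurable_snd)
  have hae : ∀ᵐ s ∂(volume.restrict (Ioi sα)), s ≠ μ := by
    have h0 : volume.restrict (Ioi sα) {μ} = 0 := by
      rw [Measure.restrict_apply (measurableSet_singleton μ)]
      exact measure_mono_null Set.inter_subset_left (measure_singleton μ)
    rw [ae_iff]
    convert h0 using 2
    ext s
    simp
  have hqnn : ∀ᵐ θ ∂(volume.restrict (Ioi (0:ℝ))), 0 ≤ q θ := by
    filter_upwards [ae_restrict_mem measurableSet_Ioi] with θ hθ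
    exact hq0 θ hθ
  have hnormint : ∀ s : ℝ, ∫ θ in Ioi (0:ℝ), ‖f s θ‖ = |s| ^ k * mixdens μ γ σ q s := by
    intro s
    have : ∀ᵐ θ ∂(volume.restrict (Ioi (0:ℝ))),
        ‖f s θ‖ = |s| ^ k * (ndens (μ + θ*γ) (θ*σ^2) s * q θ) := by
      filter_upwards [hqnn] with θ hθ
      rw [hfdef]
      simp only [Real.norm_eq_abs, abs_mul, abs_pow]
      rw [abs_of_nonneg (ndens_nonneg _ _ _), abs_of_nonneg hθ]
    rw [integral_congr_ae this, integral_const_mul]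
    rfl
  have hprod : Integrable (Function.uncurry f)
      ((volume.restrict (Ioi sα)).prod (volume.restrict (Ioi 0))) := by
    rw [integrable_prod_iff hFmeas.aestronglyMeasurable]
    constructor
    · filter_upwards [hae] with s hs
      obtain ⟨C, hC0, hC⟩ := ndens_theta_bound hσ μ γ hs
      apply Integrable.mono' (hqi.const_mul (|s|^k * C))
      · exact ((hFmeas.comp measurable_prodMk_left).aestronglyMeasurable)
      · filter_upwards [ae_restrict_mem measurableSet_Ioi] with θ hθ
        simp only [hfdef, Function.uncurry_apply_pair, Real.norm_eq_abs, abs_mul, abs_pow]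
        rw [abs_of_nonneg (ndens_nonneg _ _ _), abs_of_nonneg (hq0 θ hθ)]
        calc |s|^k * (ndens (μ + θ*γ) (θ*σ^2) s * q θ) ≤ |s|^k * (C * q θ) := by
              apply mul_le_mul_of_nonneg_left _ (by positivity)
              exact mul_le_mul_of_nonneg_right (hC θ hθ) (hq0 θ hθ)
          _ = |s|^k * C * q θ := by ring
    · apply hint.congr
      apply Eventually.of_forall
      intro s
      exact (hnormint s).symm
  have hswap := integral_integral_swap hprod
  have hlhs : ∫ s in Ioi sα, s ^ k * mixdens μ γ σ q s
      = ∫ s in Ioi sα, ∫ θ in Ioi (0:ℝ), f s θ := by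
    apply setIntegral_congr_fun measurableSet_Ioi
    intro s _
    rw [hfdef]
    simp only
    rw [integral_const_mul]
    rfl
  have hrhs : ∫ θ in Ioi (0:ℝ), ∫ s in Ioi sα, f s θ
      = ∫ θ in Ioi 0, (∫ s in Ioi sα, s ^ k * ndens (μ + θ*γ) (θ*σ^2) s) * q θ := by
    apply setIntegral_congr_fun measurableSet_Ioi
    intro θ _
    rw [hfdef]
    simp only
    rw [← integral_mul_const]
    apply setIntegral_congr_fun measurableSet_Ioi
    intro s _
    ring
  rw [hlhs, hswap, hrhs]

lemma T0_meas (μ γ σ sα : ℝ) :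
    Measurable (fun θ : ℝ => ∫ s in Ioi sα, ndens (μ + θ*γ) (θ*σ^2) s) := by
  have h : StronglyMeasurable (fun z : ℝ × ℝ => ndens (μ + z.1*γ) (z.1*σ^2) z.2) :=
    ((ndens_joint_meas μ γ σ).comp measurable_swap).stronglyMeasurable
  exact h.integral_prod_right'.measurable

lemma n0_meas (μ γ σ sα : ℝ) :
    Measurable (fun θ : ℝ => ndens (μ + θ*γ) (θ*σ^2) sα) := by
  have h := (ndens_joint_meas μ γ σ).comp
    (measurable_const.prodMk measurable_id : Measurable fun θ : ℝ => ((sα, θ) : ℝ × ℝ))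
  exact h

lemma sqrt_helper {θ : ℝ} (hθ : 0 < θ) : θ * (Real.sqrt θ)⁻¹ = Real.sqrt θ := by
  rw [← Real.mul_self_sqrt hθ.le]
  have h : Real.sqrt θ ≠ 0 := by positivity
  field_simp
  rw [Real.sqrt_sq (Real.sqrt_nonneg θ)]

lemma sqrt_le_one_add {θ : ℝ} (hθ : 0 ≤ θ) : Real.sqrt θ ≤ 1 + θ := by
  nlinarith [Real.sq_sqrt hθ, Real.sqrt_nonneg θ, sq_nonneg (Real.sqrt θ - 1)]

section IntLemmas

variable {μ γ σ sα : ℝ} {p : ℝ → ℝ}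

lemma intJ0 (hσ : 0 < σ) (hpm : Measurable p) (hp0 : ∀ θ, 0 ≤ p θ)
    (hpi : IntegrableOn p (Ioi 0)) :
    IntegrableOn (fun θ => (∫ s in Ioi sα, ndens (μ + θ*γ) (θ*σ^2) s) * p θ) (Ioi 0) := by
  apply Integrable.mono' hpi (((T0_meas μ γ σ sα).mul hpm).aestronglyMeasurable)
  filter_upwards [ae_restrict_mem measurableSet_Ioi] with θ hθ
  have hθ' : (0:ℝ) < θ := hθ
  have h1 : 0 ≤ ∫ s in Ioi sα, ndens (μ + θ*γ) (θ*σ^2) s := gauss_tail0_nonneg _ _ _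
  have h2 : (∫ s in Ioi sα, ndens (μ + θ*γ) (θ*σ^2) s) ≤ 1 :=
    gauss_tail0_le_one (v := θ*σ^2) (by positivity) _ _
  simp only [Pi.mul_apply]
  rw [Real.norm_eq_abs, abs_of_nonneg (mul_nonneg h1 (hp0 θ))]
  calc (∫ s in Ioi sα, ndens (μ + θ*γ) (θ*σ^2) s) * p θ
      ≤ 1 * p θ := mul_le_mul_of_nonneg_right h2 (hp0 θ)
    _ = p θ := one_mul _

lemma intJ1 (hσ : 0 < σ) (hpm : Measurable p) (hp0 : ∀ θ, 0 ≤ p θ)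
    (hp1i : IntegrableOn (fun θ => θ * p θ) (Ioi 0)) :
    IntegrableOn (fun θ => θ * ((∫ s in Ioi sα, ndens (μ + θ*γ) (θ*σ^2) s) * p θ)) (Ioi 0) := by
  apply Integrable.mono' hp1i
    ((measurable_id'.mul ((T0_meas μ γ σ sα).mul hpm)).aestronglyMeasurable)
  filter_upwards [ae_restrict_mem measurableSet_Ioi] with θ hθ
  have hθ' : (0:ℝ) < θ := hθ
  have h1 : 0 ≤ ∫ s in Ioi sα, ndens (μ + θ*γ) (θ*σ^2) s := gauss_tail0_nonneg _ _ _
  have h2 : (∫ s in Ioi sα, ndens (μ + θ*γ) (θ*σ^2) s) ≤ 1 :=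
    gauss_tail0_le_one (v := θ*σ^2) (by positivity) _ _
  simp only [Pi.mul_apply]
  rw [Real.norm_eq_abs, abs_of_nonneg (mul_nonneg hθ'.le (mul_nonneg h1 (hp0 θ)))]
  calc θ * ((∫ s in Ioi sα, ndens (μ + θ*γ) (θ*σ^2) s) * p θ)
      ≤ θ * (1 * p θ) := by
        apply mul_le_mul_of_nonneg_left _ hθ'.le
        exact mul_le_mul_of_nonneg_right h2 (hp0 θ)
    _ = θ * p θ := by ring

lemma intJ2 (hσ : 0 < σ) (hpm : Measurable p) (hp0 : ∀ θ, 0 ≤ p θ)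
    (hp2i : IntegrableOn (fun θ => θ^2 * p θ) (Ioi 0)) :
    IntegrableOn (fun θ => θ^2 * ((∫ s in Ioi sα, ndens (μ + θ*γ) (θ*σ^2) s) * p θ)) (Ioi 0) := by
  apply Integrable.mono' hp2i
    (((measurable_id'.pow_const 2).mul ((T0_meas μ γ σ sα).mul hpm)).aestronglyMeasurable)
  filter_upwards [ae_restrict_mem measurableSet_Ioi] with θ hθ
  have hθ' : (0:ℝ) < θ := hθ
  have h1 : 0 ≤ ∫ s in Ioi sα, ndens (μ + θ*γ) (θ*σ^2) s := gauss_tail0_nonneg _ _ _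
  have h2 : (∫ s in Ioi sα, ndens (μ + θ*γ) (θ*σ^2) s) ≤ 1 :=
    gauss_tail0_le_one (v := θ*σ^2) (by positivity) _ _
  simp only [Pi.mul_apply]
  rw [Real.norm_eq_abs, abs_of_nonneg (mul_nonneg (sq_nonneg θ) (mul_nonneg h1 (hp0 θ)))]
  calc θ^2 * ((∫ s in Ioi sα, ndens (μ + θ*γ) (θ*σ^2) s) * p θ)
      ≤ θ^2 * (1 * p θ) := by
        apply mul_le_mul_of_nonneg_left _ (sq_nonneg θ)
        exact mul_le_mul_of_nonneg_right h2 (hp0 θ)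
    _ = θ^2 * p θ := by ring

lemma intK1 (hσ : 0 < σ) (hpm : Measurable p) (hp0 : ∀ θ, 0 ≤ p θ)
    (hpi : IntegrableOn p (Ioi 0)) (hp1i : IntegrableOn (fun θ => θ * p θ) (Ioi 0)) :
    IntegrableOn (fun θ => θ * (ndens (μ + θ*γ) (θ*σ^2) sα * p θ)) (Ioi 0) := by
  have hc0 : (0:ℝ) ≤ (Real.sqrt (2*Real.pi*σ^2))⁻¹ := by positivity
  apply Integrable.mono' (((hpi.add hp1i).const_mul ((Real.sqrt (2*Real.pi*σ^2))⁻¹)))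
    ((measurable_id'.mul ((n0_meas μ γ σ sα).mul hpm)).aestronglyMeasurable)
  filter_upwards [ae_restrict_mem measurableSet_Ioi] with θ hθ
  simp only [Pi.add_apply, Pi.mul_apply]
  have hθ' : (0:ℝ) < θ := hθ
  have h1 : 0 ≤ ndens (μ + θ*γ) (θ*σ^2) sα := ndens_nonneg _ _ _
  rw [Real.norm_eq_abs, abs_of_nonneg (mul_nonneg hθ'.le (mul_nonneg h1 (hp0 θ)))]
  have hb := ndens_le_c0 hσ μ γ sα hθ'
  calc θ * (ndens (μ + θ*γ) (θ*σ^2) sα * p θ)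
      ≤ θ * (((Real.sqrt (2*Real.pi*σ^2))⁻¹ * (Real.sqrt θ)⁻¹) * p θ) := by
        apply mul_le_mul_of_nonneg_left _ hθ'.le
        exact mul_le_mul_of_nonneg_right hb (hp0 θ)
    _ = (Real.sqrt (2*Real.pi*σ^2))⁻¹ * ((θ * (Real.sqrt θ)⁻¹) * p θ) := by ring
    _ = (Real.sqrt (2*Real.pi*σ^2))⁻¹ * (Real.sqrt θ * p θ) := by rw [sqrt_helper hθ']
    _ ≤ (Real.sqrt (2*Real.pi*σ^2))⁻¹ * ((1 + θ) * p θ) := by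
        apply mul_le_mul_of_nonneg_left _ hc0
        exact mul_le_mul_of_nonneg_right (sqrt_le_one_add hθ'.le) (hp0 θ)
    _ = (Real.sqrt (2*Real.pi*σ^2))⁻¹ * (p θ + θ * p θ) := by ring

lemma intK2 (hσ : 0 < σ) (hpm : Measurable p) (hp0 : ∀ θ, 0 ≤ p θ)
    (hp1i : IntegrableOn (fun θ => θ * p θ) (Ioi 0))
    (hp2i : IntegrableOn (fun θ => θ^2 * p θ) (Ioi 0)) :
    IntegrableOn (fun θ => θ^2 * (ndens (μ + θ*γ) (θ*σ^2) sα * p θ)) (Ioi 0) := by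
  have hc0 : (0:ℝ) ≤ (Real.sqrt (2*Real.pi*σ^2))⁻¹ := by positivity
  apply Integrable.mono' (((hp1i.add hp2i).const_mul ((Real.sqrt (2*Real.pi*σ^2))⁻¹)))
    (((measurable_id'.pow_const 2).mul ((n0_meas μ γ σ sα).mul hpm)).aestronglyMeasurable)
  filter_upwards [ae_restrict_mem measurableSet_Ioi] with θ hθ
  simp only [Pi.add_apply, Pi.mul_apply]
  have hθ' : (0:ℝ) < θ := hθ
  have h1 : 0 ≤ ndens (μ + θ*γ) (θ*σ^2) sα := ndens_nonneg _ _ _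
  rw [Real.norm_eq_abs, abs_of_nonneg (mul_nonneg (sq_nonneg θ) (mul_nonneg h1 (hp0 θ)))]
  have hb := ndens_le_c0 hσ μ γ sα hθ'
  calc θ^2 * (ndens (μ + θ*γ) (θ*σ^2) sα * p θ)
      ≤ θ^2 * (((Real.sqrt (2*Real.pi*σ^2))⁻¹ * (Real.sqrt θ)⁻¹) * p θ) := by
        apply mul_le_mul_of_nonneg_left _ (sq_nonneg θ)
        exact mul_le_mul_of_nonneg_right hb (hp0 θ)
    _ = (Real.sqrt (2*Real.pi*σ^2))⁻¹ * (θ * ((θ * (Real.sqrt θ)⁻¹) * p θ)) := by ring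
    _ = (Real.sqrt (2*Real.pi*σ^2))⁻¹ * (θ * (Real.sqrt θ * p θ)) := by rw [sqrt_helper hθ']
    _ ≤ (Real.sqrt (2*Real.pi*σ^2))⁻¹ * (θ * ((1 + θ) * p θ)) := by
        apply mul_le_mul_of_nonneg_left _ hc0
        apply mul_le_mul_of_nonneg_left _ hθ'.le
        exact mul_le_mul_of_nonneg_right (sqrt_le_one_add hθ'.le) (hp0 θ)
    _ = (Real.sqrt (2*Real.pi*σ^2))⁻¹ * (θ * p θ + θ^2 * p θ) := by ring

end IntLemmas

lemma main_lemma (μ γ σ α sα : ℝ) (hσ : 0 < σ) (p : ℝ → ℝ) (hpm : Measurable p)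
    (hp0 : ∀ θ, 0 ≤ p θ) (hpi : IntegrableOn p (Ioi 0))
    (cstar css : ℝ) (hcstar : cstar = ∫ θ in Ioi (0:ℝ), θ * p θ) (hcpos : 0 < cstar)
    (hcss : css = ∫ θ in Ioi (0:ℝ), θ^2 * p θ) (hcsspos : 0 < css)
    (hα1 : α < 1)
    (hquant : surv μ γ σ p sα = 1 - α)
    (hspos : 0 < surv μ γ σ (fun θ => θ * p θ / cstar) sα)
    (hsspos : 0 < surv μ γ σ (fun θ => θ^2 * p θ / css) sα)
    (hintp : ∀ j ≤ 2, IntegrableOn (fun s => s ^ j * mixdens μ γ σ p s) (Ioi sα)) :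
    (surv μ γ σ p sα)⁻¹ *
        (∫ s in Ioi sα, (s - tailmom μ γ σ p 1 sα)^2 * mixdens μ γ σ p s)
      = cstar * (surv μ γ σ (fun θ => θ * p θ / cstar) sα) / (1-α) *
          (σ^2 * (1 + (sα - μ) * (mixdens μ γ σ (fun θ => θ * p θ / cstar) sα
            / surv μ γ σ (fun θ => θ * p θ / cstar) sα)))
        + css * (surv μ γ σ (fun θ => θ^2 * p θ / css) sα) / (1-α) *
          (γ * (γ + σ^2 * (mixdens μ γ σ (fun θ => θ^2 * p θ / css) sα
            / surv μ γ σ (fun θ => θ^2 * p θ / css) sα)))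
        - (cstar * (surv μ γ σ (fun θ => θ * p θ / cstar) sα) / (1-α) *
            (γ + σ^2 * (mixdens μ γ σ (fun θ => θ * p θ / cstar) sα
              / surv μ γ σ (fun θ => θ * p θ / cstar) sα)))^2 := by
  have hI : (0:ℝ) < 1 - α := by linarith
  have hp1i : IntegrableOn (fun θ => θ * p θ) (Ioi 0) := by
    by_contra h
    rw [hcstar, integral_undef h] at hcpos
    exact lt_irrefl 0 hcpos
  have hp2i : IntegrableOn (fun θ => θ^2 * p θ) (Ioi 0) := by
    by_contra h
    rw [hcss, integral_undef h] at hcsspos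
    exact lt_irrefl 0 hcsspos
  have hpstm : Measurable (fun θ : ℝ => θ * p θ / cstar) := (measurable_id'.mul hpm).div_const _
  have hpssm : Measurable (fun θ : ℝ => θ^2 * p θ / css) :=
    ((measurable_id'.pow_const 2).mul hpm).div_const _
  have hpst0 : ∀ θ ∈ Ioi (0:ℝ), 0 ≤ θ * p θ / cstar := fun θ hθ =>
    div_nonneg (mul_nonneg (le_of_lt hθ) (hp0 θ)) hcpos.le
  have hpss0 : ∀ θ ∈ Ioi (0:ℝ), 0 ≤ θ^2 * p θ / css := fun θ hθ =>
    div_nonneg (mul_nonneg (sq_nonneg θ) (hp0 θ)) hcsspos.le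
  have hpsti : IntegrableOn (fun θ => θ * p θ / cstar) (Ioi 0) := hp1i.div_const _
  have hpssi : IntegrableOn (fun θ => θ^2 * p θ / css) (Ioi 0) := hp2i.div_const _
  have hmixint : IntegrableOn (mixdens μ γ σ p) (Ioi sα) := by
    have h := hintp 0 (by norm_num)
    simpa using h
  have hmixstarint : IntegrableOn (mixdens μ γ σ (fun θ => θ * p θ / cstar)) (Ioi sα) := by
    by_contra h
    unfold surv at hspos
    rw [integral_undef h] at hspos
    exact lt_irrefl 0 hspos
  have hmixssint : IntegrableOn (mixdens μ γ σ (fun θ => θ^2 * p θ / css)) (Ioi sα) := by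
    by_contra h
    unfold surv at hsspos
    rw [integral_undef h] at hsspos
    exact lt_irrefl 0 hsspos
  have hmnn : ∀ s, 0 ≤ mixdens μ γ σ p s := mixdens_nonneg μ γ σ (fun θ _ => hp0 θ)
  have habs0 : IntegrableOn (fun s => |s|^(0:ℕ) * mixdens μ γ σ p s) (Ioi sα) := by
    simpa using hmixint
  have habs1 : IntegrableOn (fun s => |s|^(1:ℕ) * mixdens μ γ σ p s) (Ioi sα) := by
    simp only [pow_one]
    apply Integrable.mono' (hmixint.add (hintp 2 le_rfl))
      ((continuous_abs.aestronglyMeasurable).mul hmixint.aestronglyMeasurable)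
    filter_upwards with s
    simp only [Pi.add_apply, Pi.mul_apply]
    rw [Real.norm_eq_abs, abs_mul, abs_abs, abs_of_nonneg (hmnn s)]
    have hb : |s| ≤ 1 + s^2 := by nlinarith [sq_nonneg (|s| - 1), sq_abs s]
    calc |s| * mixdens μ γ σ p s ≤ (1 + s^2) * mixdens μ γ σ p s :=
          mul_le_mul_of_nonneg_right hb (hmnn s)
      _ = mixdens μ γ σ p s + s^2 * mixdens μ γ σ p s := by ring
  have habs2 : IntegrableOn (fun s => |s|^(2:ℕ) * mixdens μ γ σ p s) (Ioi sα) := by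
    have he : (fun s : ℝ => |s|^(2:ℕ) * mixdens μ γ σ p s)
        = fun s => s^2 * mixdens μ γ σ p s := funext fun s => by rw [sq_abs]
    rw [he]
    exact hintp 2 le_rfl
  have S0 := swap_lemma μ γ σ sα hσ 0 p hpm (fun θ _ => hp0 θ) hpi habs0
  have S1 := swap_lemma μ γ σ sα hσ 1 p hpm (fun θ _ => hp0 θ) hpi habs1
  have S2 := swap_lemma μ γ σ sα hσ 2 p hpm (fun θ _ => hp0 θ) hpi habs2
  have Sst := swap_lemma μ γ σ sα hσ 0 _ hpstm hpst0 hpsti (by simpa using hmixstarint)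
  have Sss := swap_lemma μ γ σ sα hσ 0 _ hpssm hpss0 hpssi (by simpa using hmixssint)
  simp only [pow_zero, one_mul] at S0 Sst Sss
  have hA : ∫ θ in Ioi 0, (∫ s in Ioi sα, ndens (μ + θ*γ) (θ*σ^2) s) * p θ = 1 - α := by
    rw [← S0]
    exact hquant
  have hFs : surv μ γ σ (fun θ => θ * p θ / cstar) sα
      = cstar⁻¹ * ∫ θ in Ioi 0, θ * ((∫ s in Ioi sα, ndens (μ + θ*γ) (θ*σ^2) s) * p θ) := by
    show (∫ s in Ioi sα, mixdens μ γ σ (fun θ => θ * p θ / cstar) s) = _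
    rw [Sst, show (fun θ => (∫ s in Ioi sα, ndens (μ + θ*γ) (θ*σ^2) s) * (θ * p θ / cstar))
        = fun θ => cstar⁻¹ * (θ * ((∫ s in Ioi sα, ndens (μ + θ*γ) (θ*σ^2) s) * p θ))
        from funext fun θ => by ring, integral_const_mul]
  have hB1 : ∫ θ in Ioi 0, θ * ((∫ s in Ioi sα, ndens (μ + θ*γ) (θ*σ^2) s) * p θ)
      = cstar * surv μ γ σ (fun θ => θ * p θ / cstar) sα := by
    rw [hFs, ← mul_assoc, mul_inv_cancel₀ hcpos.ne', one_mul]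
  have hfs : mixdens μ γ σ (fun θ => θ * p θ / cstar) sα
      = cstar⁻¹ * ∫ θ in Ioi 0, θ * (ndens (μ + θ*γ) (θ*σ^2) sα * p θ) := by
    show (∫ θ in Ioi (0:ℝ), ndens (μ + θ*γ) (θ*σ^2) sα * (θ * p θ / cstar)) = _
    rw [show (fun θ => ndens (μ + θ*γ) (θ*σ^2) sα * (θ * p θ / cstar))
        = fun θ => cstar⁻¹ * (θ * (ndens (μ + θ*γ) (θ*σ^2) sα * p θ))
        from funext fun θ => by ring, integral_const_mul]
  have hB2 : ∫ θ in Ioi 0, θ * (ndens (μ + θ*γ) (θ*σ^2) sα * p θ)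
      = cstar * mixdens μ γ σ (fun θ => θ * p θ / cstar) sα := by
    rw [hfs, ← mul_assoc, mul_inv_cancel₀ hcpos.ne', one_mul]
  have hFss : surv μ γ σ (fun θ => θ^2 * p θ / css) sα
      = css⁻¹ * ∫ θ in Ioi 0, θ^2 * ((∫ s in Ioi sα, ndens (μ + θ*γ) (θ*σ^2) s) * p θ) := by
    show (∫ s in Ioi sα, mixdens μ γ σ (fun θ => θ^2 * p θ / css) s) = _
    rw [Sss, show (fun θ => (∫ s in Ioi sα, ndens (μ + θ*γ) (θ*σ^2) s) * (θ^2 * p θ / css))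
        = fun θ => css⁻¹ * (θ^2 * ((∫ s in Ioi sα, ndens (μ + θ*γ) (θ*σ^2) s) * p θ))
        from funext fun θ => by ring, integral_const_mul]
  have hC1 : ∫ θ in Ioi 0, θ^2 * ((∫ s in Ioi sα, ndens (μ + θ*γ) (θ*σ^2) s) * p θ)
      = css * surv μ γ σ (fun θ => θ^2 * p θ / css) sα := by
    rw [hFss, ← mul_assoc, mul_inv_cancel₀ hcsspos.ne', one_mul]
  have hfss : mixdens μ γ σ (fun θ => θ^2 * p θ / css) sα
      = css⁻¹ * ∫ θ in Ioi 0, θ^2 * (ndens (μ + θ*γ) (θ*σ^2) sα * p θ) := by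
    show (∫ θ in Ioi (0:ℝ), ndens (μ + θ*γ) (θ*σ^2) sα * (θ^2 * p θ / css)) = _
    rw [show (fun θ => ndens (μ + θ*γ) (θ*σ^2) sα * (θ^2 * p θ / css))
        = fun θ => css⁻¹ * (θ^2 * (ndens (μ + θ*γ) (θ*σ^2) sα * p θ))
        from funext fun θ => by ring, integral_const_mul]
  have hC2 : ∫ θ in Ioi 0, θ^2 * (ndens (μ + θ*γ) (θ*σ^2) sα * p θ)
      = css * mixdens μ γ σ (fun θ => θ^2 * p θ / css) sα := by
    rw [hfss, ← mul_assoc, mul_inv_cancel₀ hcsspos.ne', one_mul]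
  have J0 := intJ0 (μ := μ) (γ := γ) (sα := sα) hσ hpm hp0 hpi
  have J1 := intJ1 (μ := μ) (γ := γ) (sα := sα) hσ hpm hp0 hp1i
  have J2 := intJ2 (μ := μ) (γ := γ) (sα := sα) hσ hpm hp0 hp2i
  have K1 := intK1 (μ := μ) (γ := γ) (sα := sα) hσ hpm hp0 hpi hp1i
  have K2 := intK2 (μ := μ) (γ := γ) (sα := sα) hσ hpm hp0 hp1i hp2i
  have hM1 : ∫ s in Ioi sα, s^1 * mixdens μ γ σ p s
      = μ*(1-α) + γ*(cstar * surv μ γ σ (fun θ => θ * p θ / cstar) sα)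
        + σ^2*(cstar * mixdens μ γ σ (fun θ => θ * p θ / cstar) sα) := by
    rw [S1]
    have hcongr : ∫ θ in Ioi 0, (∫ s in Ioi sα, s^1 * ndens (μ + θ*γ) (θ*σ^2) s) * p θ
        = ∫ θ in Ioi 0, ((μ+θ*γ) * (∫ s in Ioi sα, ndens (μ + θ*γ) (θ*σ^2) s)
            + (θ*σ^2) * ndens (μ + θ*γ) (θ*σ^2) sα) * p θ := by
      apply setIntegral_congr_fun measurableSet_Ioi
      intro θ hθ
      beta_reduce
      have hθ' : (0:ℝ) < θ := hθ
      have hg : ∫ s in Ioi sα, s^1 * ndens (μ + θ*γ) (θ*σ^2) s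
          = (μ+θ*γ) * (∫ s in Ioi sα, ndens (μ + θ*γ) (θ*σ^2) s)
            + (θ*σ^2) * ndens (μ + θ*γ) (θ*σ^2) sα := by
        simp only [pow_one]
        exact gauss_tail1 (v := θ*σ^2) (by positivity) _ _
      rw [hg]
    rw [hcongr, show (fun θ => ((μ+θ*γ) * (∫ s in Ioi sα, ndens (μ + θ*γ) (θ*σ^2) s)
            + (θ*σ^2) * ndens (μ + θ*γ) (θ*σ^2) sα) * p θ)
        = fun θ => μ * ((∫ s in Ioi sα, ndens (μ + θ*γ) (θ*σ^2) s) * p θ)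
            + (γ * (θ * ((∫ s in Ioi sα, ndens (μ + θ*γ) (θ*σ^2) s) * p θ))
            + σ^2 * (θ * (ndens (μ + θ*γ) (θ*σ^2) sα * p θ)))
        from funext fun θ => by ring]
    have i2 : IntegrableOn (fun θ => γ * (θ * ((∫ s in Ioi sα, ndens (μ + θ*γ) (θ*σ^2) s) * p θ))
        + σ^2 * (θ * (ndens (μ + θ*γ) (θ*σ^2) sα * p θ))) (Ioi 0) :=
      (J1.const_mul γ).add (K1.const_mul (σ^2))
    rw [integral_add (J0.const_mul μ) i2,
        integral_add (J1.const_mul γ) (K1.const_mul (σ^2)),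
        integral_const_mul, integral_const_mul, integral_const_mul, hA, hB1, hB2]
    ring
  have hM2 : ∫ s in Ioi sα, s^2 * mixdens μ γ σ p s
      = μ^2*(1-α) + ((2*μ*γ+σ^2)*(cstar * surv μ γ σ (fun θ => θ * p θ / cstar) sα)
        + (γ^2*(css * surv μ γ σ (fun θ => θ^2 * p θ / css) sα)
        + ((μ+sα)*σ^2*(cstar * mixdens μ γ σ (fun θ => θ * p θ / cstar) sα)
        + γ*σ^2*(css * mixdens μ γ σ (fun θ => θ^2 * p θ / css) sα)))) := by
    rw [S2]
    have hcongr : ∫ θ in Ioi 0, (∫ s in Ioi sα, s^2 * ndens (μ + θ*γ) (θ*σ^2) s) * p θ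
        = ∫ θ in Ioi 0, (((μ+θ*γ)^2 + θ*σ^2) * (∫ s in Ioi sα, ndens (μ + θ*γ) (θ*σ^2) s)
            + ((μ+θ*γ) + sα) * (θ*σ^2) * ndens (μ + θ*γ) (θ*σ^2) sα) * p θ := by
      apply setIntegral_congr_fun measurableSet_Ioi
      intro θ hθ
      beta_reduce
      have hθ' : (0:ℝ) < θ := hθ
      have hg : ∫ s in Ioi sα, s^2 * ndens (μ + θ*γ) (θ*σ^2) s
          = ((μ+θ*γ)^2 + θ*σ^2) * (∫ s in Ioi sα, ndens (μ + θ*γ) (θ*σ^2) s)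
            + ((μ+θ*γ) + sα) * (θ*σ^2) * ndens (μ + θ*γ) (θ*σ^2) sα := by
        exact gauss_tail2 (v := θ*σ^2) (by positivity) _ _
      rw [hg]
    rw [hcongr, show (fun θ => (((μ+θ*γ)^2 + θ*σ^2) * (∫ s in Ioi sα, ndens (μ + θ*γ) (θ*σ^2) s)
            + ((μ+θ*γ) + sα) * (θ*σ^2) * ndens (μ + θ*γ) (θ*σ^2) sα) * p θ)
        = fun θ => μ^2 * ((∫ s in Ioi sα, ndens (μ + θ*γ) (θ*σ^2) s) * p θ)
            + ((2*μ*γ+σ^2) * (θ * ((∫ s in Ioi sα, ndens (μ + θ*γ) (θ*σ^2) s) * p θ))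
            + (γ^2 * (θ^2 * ((∫ s in Ioi sα, ndens (μ + θ*γ) (θ*σ^2) s) * p θ))
            + ((μ+sα)*σ^2 * (θ * (ndens (μ + θ*γ) (θ*σ^2) sα * p θ))
            + γ*σ^2 * (θ^2 * (ndens (μ + θ*γ) (θ*σ^2) sα * p θ)))))
        from funext fun θ => by ring]
    have i5 : IntegrableOn (fun θ => (μ+sα)*σ^2 * (θ * (ndens (μ + θ*γ) (θ*σ^2) sα * p θ))
        + γ*σ^2 * (θ^2 * (ndens (μ + θ*γ) (θ*σ^2) sα * p θ))) (Ioi 0) :=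
      (K1.const_mul _).add (K2.const_mul _)
    have i4 : IntegrableOn (fun θ =>
        γ^2 * (θ^2 * ((∫ s in Ioi sα, ndens (μ + θ*γ) (θ*σ^2) s) * p θ))
        + ((μ+sα)*σ^2 * (θ * (ndens (μ + θ*γ) (θ*σ^2) sα * p θ))
          + γ*σ^2 * (θ^2 * (ndens (μ + θ*γ) (θ*σ^2) sα * p θ)))) (Ioi 0) :=
      (J2.const_mul _).add i5
    have i3 : IntegrableOn (fun θ =>
        (2*μ*γ+σ^2) * (θ * ((∫ s in Ioi sα, ndens (μ + θ*γ) (θ*σ^2) s) * p θ))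
        + (γ^2 * (θ^2 * ((∫ s in Ioi sα, ndens (μ + θ*γ) (θ*σ^2) s) * p θ))
          + ((μ+sα)*σ^2 * (θ * (ndens (μ + θ*γ) (θ*σ^2) sα * p θ))
            + γ*σ^2 * (θ^2 * (ndens (μ + θ*γ) (θ*σ^2) sα * p θ))))) (Ioi 0) :=
      (J1.const_mul _).add i4
    rw [integral_add (J0.const_mul _) i3,
        integral_add (J1.const_mul _) i4,
        integral_add (J2.const_mul _) i5,
        integral_add (K1.const_mul _) (K2.const_mul _),
        integral_const_mul, integral_const_mul, integral_const_mul, integral_const_mul,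
        integral_const_mul, hA, hB1, hC1, hB2, hC2]
  have hM0 : ∫ s in Ioi sα, mixdens μ γ σ p s = 1 - α := hquant
  set C := tailmom μ γ σ p 1 sα with hCdef
  have hCTE : C = (1-α)⁻¹ * (μ*(1-α) + γ*(cstar * surv μ γ σ (fun θ => θ * p θ / cstar) sα)
      + σ^2*(cstar * mixdens μ γ σ (fun θ => θ * p θ / cstar) sα)) := by
    rw [hCdef]
    unfold tailmom
    rw [hquant, hM1]
  have hexpand : ∫ s in Ioi sα, (s - C)^2 * mixdens μ γ σ p s
      = ((∫ s in Ioi sα, s^2 * mixdens μ γ σ p s)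
        - (2*C) * (∫ s in Ioi sα, s^1 * mixdens μ γ σ p s))
        + C^2 * (∫ s in Ioi sα, mixdens μ γ σ p s) := by
    rw [show (fun s => (s - C)^2 * mixdens μ γ σ p s)
        = fun s => (s^2 * mixdens μ γ σ p s - (2*C) * (s^1 * mixdens μ γ σ p s))
            + C^2 * mixdens μ γ σ p s from funext fun s => by ring]
    have i1 : IntegrableOn (fun s => s^2 * mixdens μ γ σ p s
        - (2*C) * (s^1 * mixdens μ γ σ p s)) (Ioi sα) :=
      (hintp 2 le_rfl).sub ((hintp 1 (by norm_num)).const_mul _)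
    rw [integral_add i1 (hmixint.const_mul _),
        integral_sub (hintp 2 le_rfl) ((hintp 1 (by norm_num)).const_mul _),
        integral_const_mul, integral_const_mul]
  rw [hquant, hexpand, hM2, hM1, hM0, hCTE]
  field_simp
  ring

end NMVMAux

/-- tail variance of a univariate NMVM random variable. -/
theorem nmvm_tail_variance
    (μ γ σ α sα : ℝ) (hσ : 0 < σ) (p : ℝ → ℝ)
    (hp0 : ∀ θ, 0 ≤ p θ) (hp1 : ∫ θ in Set.Ioi (0:ℝ), p θ = 1)
    (cstar : ℝ) (hcstar : cstar = ∫ θ in Set.Ioi (0:ℝ), θ * p θ) (hcpos : 0 < cstar)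
    (css : ℝ) (hcss : css = ∫ θ in Set.Ioi (0:ℝ), θ ^ 2 * p θ) (hcsspos : 0 < css)
    (pstar : ℝ → ℝ) (hpstar : pstar = fun θ => θ * p θ / cstar)
    (pss : ℝ → ℝ) (hpss : pss = fun θ => θ ^ 2 * p θ / css)
    (hα01 : α ∈ Set.Ioo (0:ℝ) 1)
    (hquant : surv μ γ σ p sα = 1 - α)
    (αstar : ℝ) (hαstar : αstar = 1 - surv μ γ σ pstar sα)
    (αss : ℝ) (hαss : αss = 1 - surv μ γ σ pss sα)
    (hspos : 0 < surv μ γ σ pstar sα) (hsspos : 0 < surv μ γ σ pss sα)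
    (hintp : ∀ j ≤ 2, IntegrableOn (fun s => s ^ j * mixdens μ γ σ p s) (Set.Ioi sα))
    (CTE : ℝ) (hCTE : CTE = tailmom μ γ σ p 1 sα)
    (TV : ℝ)
    (hTV : TV = (surv μ γ σ p sα)⁻¹ *
        ∫ s in Set.Ioi sα, (s - CTE) ^ 2 * mixdens μ γ σ p s) :
    TV = cstar * (1 - αstar) / (1 - α) *
          (σ ^ 2 * (1 + (sα - μ) * (mixdens μ γ σ pstar sα / surv μ γ σ pstar sα)))
        + css * (1 - αss) / (1 - α) *
          (γ * (γ + σ ^ 2 * (mixdens μ γ σ pss sα / surv μ γ σ pss sα)))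
        - (cstar * (1 - αstar) / (1 - α) *
            (γ + σ ^ 2 * (mixdens μ γ σ pstar sα / surv μ γ σ pstar sα))) ^ 2 := by

  obtain ⟨hα0, hα1⟩ := hα01
  have hpi : IntegrableOn p (Ioi 0) := by
    by_contra h
    rw [integral_undef h] at hp1
    norm_num at hp1
  obtain ⟨p', hp'sm, hp'eq⟩ := hpi.aestronglyMeasurable
  set P : ℝ → ℝ := fun θ => max (p' θ) 0 with hPdef
  have hPm : Measurable P := (hp'sm.measurable).max measurable_const
  have hP0 : ∀ θ, 0 ≤ P θ := fun θ => le_max_right _ _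
  have hPeq : ∀ᵐ θ ∂(volume.restrict (Ioi (0:ℝ))), p θ = P θ := by
    filter_upwards [hp'eq] with θ h
    rw [hPdef]
    simp only
    rw [← h, max_eq_left (hp0 θ)]
  have hPi : IntegrableOn P (Ioi 0) := hpi.congr hPeq
  have hmixeq : mixdens μ γ σ p = mixdens μ γ σ P := by
    funext s
    unfold mixdens
    apply integral_congr_ae
    filter_upwards [hPeq] with θ h
    rw [h]
  have hmixstar : mixdens μ γ σ pstar = mixdens μ γ σ (fun θ => θ * P θ / cstar) := by
    funext s
    unfold mixdens
    apply integral_congr_ae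
    filter_upwards [hPeq] with θ h
    rw [hpstar]
    simp only
    rw [h]
  have hmixss : mixdens μ γ σ pss = mixdens μ γ σ (fun θ => θ^2 * P θ / css) := by
    funext s
    unfold mixdens
    apply integral_congr_ae
    filter_upwards [hPeq] with θ h
    rw [hpss]
    simp only
    rw [h]
  have hsurveq : surv μ γ σ p = surv μ γ σ P := by
    funext c
    unfold surv
    rw [hmixeq]
  have hsurvstar : surv μ γ σ pstar = surv μ γ σ (fun θ => θ * P θ / cstar) := by
    funext c
    unfold surv
    rw [hmixstar]
  have hsurvss : surv μ γ σ pss = surv μ γ σ (fun θ => θ^2 * P θ / css) := by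
    funext c
    unfold surv
    rw [hmixss]
  have hcstar' : cstar = ∫ θ in Ioi (0:ℝ), θ * P θ := by
    rw [hcstar]
    apply integral_congr_ae
    filter_upwards [hPeq] with θ h
    rw [h]
  have hcss' : css = ∫ θ in Ioi (0:ℝ), θ^2 * P θ := by
    rw [hcss]
    apply integral_congr_ae
    filter_upwards [hPeq] with θ h
    rw [h]
  have hintP : ∀ j ≤ 2, IntegrableOn (fun s => s ^ j * mixdens μ γ σ P s) (Ioi sα) := by
    intro j hj
    rw [← hmixeq]
    exact hintp j hj
  have hquant' : surv μ γ σ P sα = 1 - α := by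
    rw [← hsurveq]
    exact hquant
  have hspos' : 0 < surv μ γ σ (fun θ => θ * P θ / cstar) sα := by
    rw [← hsurvstar]
    exact hspos
  have hsspos' : 0 < surv μ γ σ (fun θ => θ^2 * P θ / css) sα := by
    rw [← hsurvss]
    exact hsspos
  have key := main_lemma μ γ σ α sα hσ P hPm hP0 hPi cstar css hcstar' hcpos hcss' hcsspos
    hα1 hquant' hspos' hsspos' hintP
  rw [hquant'] at key
  have htm : tailmom μ γ σ p 1 sα = tailmom μ γ σ P 1 sα := by
    unfold tailmom
    rw [hsurveq, hmixeq]
  rw [hTV, hCTE, hαstar, hαss, hquant, htm, hmixeq, hmixstar, hmixss, hsurvstar, hsurvss,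
    sub_sub_cancel, sub_sub_cancel]
  exact key
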